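/- Let f(a,b) = a² + 5a + 6 − 2ab − 5b² + b and g(a,b) = (a+2b+1)·f(a,b). If integers a₁, b₁, a₂, b₂, a₃, b₃ satisfy f(−a₁,−b₁) = f(−a₂,−b₂) = f(−a₃,−b₃) = 0 and g(a₁−a₂, b₁−b₂) = g(a₁−a₃, b₁−b₃) = g(a₂−a₃, b₂−b₃) = 0, then (a₁,b₁,a₂,b₂,a₃,b₃) is one of the four tuples (0,1,2,0,−3,3), (0,1,2,0,3,0), (1,−1,2,−1,4,−2), (7,−4,2,−1,4,−2). -/

import Mathlib

/-- `f a b = a² + 5a + 6 − 2ab − 5b² + b`. -/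
def f (a b : ℤ) : ℤ := a ^ 2 + 5 * a + 6 - 2 * a * b - 5 * b ^ 2 + b

/-- `g a b = (a + 2b + 1) · f a b`, six times the Euler characteristic of
`O_X(aH+bE)` on the blow-up of `ℙ³` at a twisted cubic curve. -/
def g (a b : ℤ) : ℤ := (a + 2 * b + 1) * f a b


/-- Pell-type equation capturing `f(-a,-b) = 0` in the coordinates
`m = 1-a-2b`, `r = 3-2a-2b`. -/
def Sol (m r : ℤ) : Prop := 8*(m*m) - 3*(r*r) = 5

lemma sq_eq_one_aux (x : ℤ) (h : x*x = 1) (h1 : 1 ≤ x) : x = 1 := by nlinarith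

lemma sq_eq_nine (x : ℤ) (h : x*x = 9) (h1 : 1 ≤ x) : x = 3 := by nlinarith

lemma pos_factor (s d : ℤ) (hs : 0 < s) (hsd : 0 < s*d) : 0 < d := by
  by_contra hc
  push_neg at hc
  have := mul_le_mul_of_nonneg_left hc (le_of_lt hs)
  simp at this
  omega

lemma sol_small (m r : ℤ) (h : Sol m r) (h1 : 1 ≤ m) (h2 : m ≤ 7) (h3 : 1 ≤ r) :
    (m = 1 ∧ r = 1) ∨ (m = 2 ∧ r = 3) := by
  unfold Sol at h
  have hb : r ≤ 11 := by
    by_contra h4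
    push_neg at h4
    have q1 : (12:ℤ)*12 ≤ r*r := mul_self_le_mul_self (by norm_num) (by linarith)
    have q2 : m*m ≤ 7*7 := mul_self_le_mul_self (by linarith) h2
    linarith
  interval_cases m <;> interval_cases r <;> omega

lemma sol_pos (m r : ℤ) (h : Sol m r) : m ≠ 0 ∧ r ≠ 0 := by
  unfold Sol at h
  constructor
  · rintro rfl
    have := mul_self_nonneg r
    linarith
  · rintro rfl
    have h8 : 8*(m*m) = 5 := by linarith
    rcases le_or_gt 1 (m*m) with h'|h'
    · linarith
    · have := mul_self_nonneg m; nlinarith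

lemma sol_abs (m r : ℤ) (h : Sol m r) : Sol (m.natAbs : ℤ) (r.natAbs : ℤ) := by
  unfold Sol at *
  rw [Int.natAbs_mul_self', Int.natAbs_mul_self']
  exact h

/-- gap lemma: two positive solutions are (1,2) or differ multiplicatively. -/
lemma sol_gap : ∀ n : ℕ, ∀ m r m' r' : ℤ, m'.natAbs ≤ n → Sol m r → Sol m' r' →
    1 ≤ m → 1 ≤ r → 1 ≤ r' → m < m' → (m = 1 ∧ m' = 2) ∨ 2*m + 3 ≤ m' := by
  intro n
  induction n using Nat.strong_induction_on with
  | _ n IH =>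
    intro m r m' r' hn hm hm' h1m h1r h1r' hlt
    rcases le_or_gt m' 7 with hs | hs
    · -- small case
      rcases sol_small m' r' hm' (by linarith) hs h1r' with ⟨e1,e2⟩ | ⟨e1,e2⟩
      · omega
      · rcases sol_small m r hm h1m (by omega) h1r with ⟨f1,f2⟩ | ⟨f1,f2⟩
        · left; exact ⟨f1, e1⟩
        · omega
    · -- m' ≥ 8
      rcases le_or_gt m 2 with hm2 | hm2
      · right; omega
      · -- m ≥ 3, show m ≥ 8
        have hm8 : 8 ≤ m := by
          by_contra hc
          push_neg at hc
          rcases sol_small m r hm h1m (by omega) h1r with ⟨f1,_⟩ | ⟨f1,_⟩ <;> omega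
        have hm'8 : 8 ≤ m' := by omega
        have hmm : 8*8 ≤ m*m := mul_self_le_mul_self (by norm_num) hm8
        have hmm' : 8*8 ≤ m'*m' := mul_self_le_mul_self (by norm_num) hm'8
        unfold Sol at hm hm'
        -- 5r ≥ 8m + 1
        have h5r : 8*m + 1 ≤ 5*r := by
          by_contra hc
          push_neg at hc
          have q : (5*r)*(5*r) ≤ (8*m)*(8*m) :=
            mul_self_le_mul_self (by linarith) (by linarith)
          linarith only [q, hm, hmm]
        have h5r' : 8*m' + 1 ≤ 5*r' := by
          by_contra hc
          push_neg at hc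
          have q : (5*r')*(5*r')  ≤ (8*m')*(8*m') :=
            mul_self_le_mul_self (by linarith) (by linarith)
          linarith only [q, hm', hmm']
        -- descent values
        have hm0 : 1 ≤ 5*m - 3*r := by
          by_contra hc
          push_neg at hc
          have q : (3*r)*(3*r) ≥ (5*m)*(5*m) :=
            mul_self_le_mul_self (by linarith) (by linarith)
          linarith only [q, hm, mul_self_nonneg m]
        have hm0' : 1 ≤ 5*m' - 3*r' := by
          by_contra hc
          push_neg at hc
          have q : (3*r')*(3*r') ≥ (5*m')*(5*m') :=
            mul_self_le_mul_self (by linarith) (by linarith)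
          linarith only [q, hm', mul_self_nonneg m']
        have hr0 : 1 ≤ 5*r - 8*m := by linarith
        have hr0' : 1 ≤ 5*r' - 8*m' := by linarith
        -- new solutions
        have hS0 : Sol (5*m - 3*r) (5*r - 8*m) := by unfold Sol; linear_combination hm
        have hS0' : Sol (5*m' - 3*r') (5*r' - 8*m') := by unfold Sol; linear_combination hm'
        -- descent strictly decreases the second point
        have hdec : 5*m' - 3*r' < m' := by
          by_contra hc
          push_neg at hc
          have q : (3*r')*(3*r') ≤ (4*m')*(4*m') :=
            mul_self_le_mul_self (by linarith) (by linarith)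
          linarith only [q, hm', hmm']
        -- monotonicity: descended first < descended second
        have key : (r + r') * ((5*m' - 3*r') - (5*m - 3*r)) =
            (m' - m) * (5*(r+r') - 8*(m+m')) := by linear_combination hm' - hm
        have hmono : 5*m - 3*r < 5*m' - 3*r' := by
          have hX : 0 < 5*(r+r') - 8*(m+m') := by linarith
          have h2 : 0 < (m' - m) * (5*(r+r') - 8*(m+m')) :=
            mul_pos (by linarith) hX
          rw [← key] at h2
          have := pos_factor (r + r') _ (by linarith) h2
          linarith
        -- apply induction hypothesis
        have hrec := IH (5*m' - 3*r').natAbs (by omega)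
          (5*m - 3*r) (5*r - 8*m) (5*m' - 3*r') (5*r' - 8*m')
          (le_refl _) hS0 hS0' hm0 hr0 hr0' hmono
        rcases hrec with ⟨e1, e2⟩ | hge
        · -- base reconstruction: m = 8, m' = 19
          right
          unfold Sol at hS0 hS0'
          rw [e1] at hS0
          rw [e2] at hS0'
          have hx : (5*r - 8*m)*(5*r - 8*m) = 1 := by linarith only [hS0]
          have hx' : (5*r' - 8*m')*(5*r' - 8*m') = 9 := by linarith only [hS0']
          have hv : 5*r - 8*m = 1 := sq_eq_one_aux _ hx hr0
          have hv' : 5*r' - 8*m' = 3 := sq_eq_nine _ hx' hr0' 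
          omega
        · -- inductive step
          right
          have hrr : 2*(5*r - 8*m) + 1 ≤ 5*r' - 8*m' := by
            by_contra hc
            push_neg at hc
            unfold Sol at hS0 hS0'
            have q1 : (5*r'-8*m')*(5*r'-8*m') ≤ (2*(5*r-8*m))*(2*(5*r-8*m)) :=
              mul_self_le_mul_self (by linarith) (by linarith)
            have q2 : (2*(5*m-3*r)+3)*(2*(5*m-3*r)+3) ≤ (5*m'-3*r')*(5*m'-3*r') :=
              mul_self_le_mul_self (by linarith) hge
            linarith only [q1, q2, hS0, hS0', hm0]
          linarith

lemma sol_tri (m r : ℤ) (h : Sol m r) :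
    (m.natAbs = 1 ∧ r.natAbs = 1) ∨ (m.natAbs = 2 ∧ r.natAbs = 3) ∨
    (8 ≤ m.natAbs ∧ 13 ≤ r.natAbs) := by
  obtain ⟨hm0, hr0⟩ := sol_pos m r h
  have habs := sol_abs m r h
  have h1m : 1 ≤ (m.natAbs : ℤ) := by omega
  have h1r : 1 ≤ (r.natAbs : ℤ) := by omega
  rcases le_or_gt (m.natAbs : ℤ) 7 with hs | hs
  · rcases sol_small _ _ habs h1m hs h1r with ⟨e1,e2⟩ | ⟨e1,e2⟩
    · left; omega
    · right; left; omega
  · right; right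
    constructor
    · omega
    · by_contra hc
      push_neg at hc
      unfold Sol at habs
      have q1 : ((r.natAbs:ℤ))*((r.natAbs:ℤ)) ≤ 12*12 :=
        mul_self_le_mul_self (by omega) (by omega)
      have q2 : (8:ℤ)*8 ≤ (m.natAbs:ℤ)*(m.natAbs:ℤ) :=
        mul_self_le_mul_self (by norm_num) (by omega)
      linarith

lemma sol_gapA (p q s t : ℤ) (hp : Sol p q) (hs : Sol s t) (h : p.natAbs < s.natAbs) :
    (p.natAbs = 1 ∧ s.natAbs = 2) ∨ 2*p.natAbs + 3 ≤ s.natAbs := by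
  obtain ⟨hp0, hq0⟩ := sol_pos p q hp
  obtain ⟨hs0, ht0⟩ := sol_pos s t hs
  have h1 := sol_abs p q hp
  have h2 := sol_abs s t hs
  have := sol_gap s.natAbs (p.natAbs:ℤ) (q.natAbs:ℤ) (s.natAbs:ℤ) (t.natAbs:ℤ)
    (by omega) h1 h2 (by omega) (by omega) (by omega) (by omega)
  omega

lemma sol_sqeq (m r t : ℤ) (h1 : Sol m r) (h2 : Sol m t) : r = t ∨ r = -t := by
  unfold Sol at h1 h2
  have h3 : 3*((r - t)*(r + t)) = 0 := by linear_combination h2 - h1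
  have h4 : (r - t)*(r + t) = 0 := by linarith
  rcases mul_eq_zero.mp h4 with h5 | h5
  · left; linarith
  · right; linarith

lemma sol_negFst (x y : ℤ) (h : Sol (-x) y) : Sol x y := by
  unfold Sol at *; linear_combination h

lemma rval1 (m r : ℤ) (h : Sol m r) (hm : m = 1 ∨ m = -1) : r = 1 ∨ r = -1 := by
  unfold Sol at h
  have hmm : m*m = 1 := by rcases hm with rfl | rfl <;> norm_num
  have h3 : 3*((r - 1)*(r + 1)) = 0 := by linear_combination 8*hmm - h
  have h4 : (r - 1)*(r + 1) = 0 := by linarith only [h3]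
  rcases mul_eq_zero.mp h4 with h5 | h5
  · left; linarith only [h5]
  · right; linarith only [h5]

lemma rval2 (m r : ℤ) (h : Sol m r) (hm : m = 2 ∨ m = -2) : r = 3 ∨ r = -3 := by
  unfold Sol at h
  have hmm : m*m = 4 := by rcases hm with rfl | rfl <;> norm_num
  have h3 : 3*((r - 3)*(r + 3)) = 0 := by linear_combination 8*hmm - h
  have h4 : (r - 3)*(r + 3) = 0 := by linarith only [h3]
  rcases mul_eq_zero.mp h4 with h5 | h5
  · left; linarith only [h5]
  · right; linarith only [h5]

lemma sol_tri' (m r : ℤ) (h : Sol m r) :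
    ((m = 1 ∨ m = -1) ∧ (r = 1 ∨ r = -1)) ∨
    ((m = 2 ∨ m = -2) ∧ (r = 3 ∨ r = -3)) ∨
    ((8 ≤ m ∨ m ≤ -8) ∧ (13 ≤ r ∨ r ≤ -13)) := by
  have t := sol_tri m r h
  omega

lemma pairL (m' r' r : ℤ) (hm' : Sol m' r') (hm : Sol (m' + 1) r) :
    m' = 1 ∨ m' = -2 := by
  have t1 := sol_tri' m' r' hm'
  have t2 := sol_tri' (m' + 1) r hm
  rcases t1 with A | A | A <;> rcases t2 with B | B | B
  · omega
  · omega
  · omega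
  · omega
  · omega
  · omega
  · omega
  · omega
  · -- both big
    rcases Nat.lt_trichotomy m'.natAbs (m' + 1).natAbs with h | h | h
    · rcases sol_gapA _ _ _ _ hm' hm h with h' | h' <;> omega
    · omega
    · rcases sol_gapA _ _ _ _ hm hm' h with h' | h' <;> omega

set_option maxHeartbeats 1000000 in
lemma pairF (m r m' r' : ℤ) (hm : Sol m r) (hm' : Sol m' r')
    (hd : Sol (m - m' - 1) (r - r' - 3)) :
    (m = 1 ∧ r = 1 ∧ m' = 1 ∧ r' = -1) ∨
    (m = 1 ∧ r = 1 ∧ m' = -1 ∧ r' = -1) ∨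
    (m = -1 ∧ r = 1 ∧ m' = -1 ∧ r' = -1) := by
  have t1 := sol_tri' m r hm
  have t2 := sol_tri' m' r' hm'
  have t3 := sol_tri' _ _ hd
  have smallbig : ∀ x y x' y' : ℤ, Sol x y → Sol x' y' →
      Sol (x - x' - 1) (y - y' - 3) →
      ((x = 1 ∨ x = -1) ∧ (y = 1 ∨ y = -1)) ∨ ((x = 2 ∨ x = -2) ∧ (y = 3 ∨ y = -3)) →
      ((8 ≤ x' ∨ x' ≤ -8) ∧ (13 ≤ y' ∨ y' ≤ -13)) → False := by
    intro x y x' y' hx hx' hdd A B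
    have t3' := sol_tri' _ _ hdd
    rcases Nat.lt_trichotomy (x - x' - 1).natAbs x'.natAbs with h | h | h
    · rcases sol_gapA _ _ _ _ hdd hx' h with h' | h' <;> omega
    · rcases Int.natAbs_eq_natAbs_iff.mp h with h' | h'
      · omega
      · rw [h'] at hdd
        have := sol_sqeq _ _ _ hx' (sol_negFst _ _ hdd)
        omega
    · rcases sol_gapA _ _ _ _ hx' hdd h with h' | h' <;> omega
  have bigsmall : ∀ x y x' y' : ℤ, Sol x y → Sol x' y' →
      Sol (x - x' - 1) (y - y' - 3) →
      ((8 ≤ x ∨ x ≤ -8) ∧ (13 ≤ y ∨ y ≤ -13)) →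
      ((x' = 1 ∨ x' = -1) ∧ (y' = 1 ∨ y' = -1)) ∨ ((x' = 2 ∨ x' = -2) ∧ (y' = 3 ∨ y' = -3)) →
      False := by
    intro x y x' y' hx hx' hdd A B
    have t3' := sol_tri' _ _ hdd
    rcases Nat.lt_trichotomy (x - x' - 1).natAbs x.natAbs with h | h | h
    · rcases sol_gapA _ _ _ _ hdd hx h with h' | h' <;> omega
    · rcases Int.natAbs_eq_natAbs_iff.mp h with h' | h'
      · rw [h'] at hdd
        have := sol_sqeq _ _ _ hx hdd
        omega
      · omega
    · rcases sol_gapA _ _ _ _ hx hdd h with h' | h' <;> omega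
  rcases t1 with A | A | A <;> rcases t2 with B | B | B
  · omega
  · omega
  · exact absurd (smallbig m r m' r' hm hm' hd (Or.inl A) B) (by simp)
  · omega
  · omega
  · exact absurd (smallbig m r m' r' hm hm' hd (Or.inr A) B) (by simp)
  · exact absurd (bigsmall m r m' r' hm hm' hd A (Or.inl B)) (by simp)
  · exact absurd (bigsmall m r m' r' hm hm' hd A (Or.inr B)) (by simp)
  · -- both big
    exfalso
    rcases Nat.lt_trichotomy m.natAbs m'.natAbs with h | h | h
    · have hG := sol_gapA _ _ _ _ hm hm' h
      rcases Nat.lt_trichotomy (m - m' - 1).natAbs m'.natAbs with h2 | h2 | h2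
      · rcases sol_gapA _ _ _ _ hd hm' h2 with h' | h' <;> omega
      · omega
      · rcases sol_gapA _ _ _ _ hm' hd h2 with h' | h' <;> omega
    · rcases Int.natAbs_eq_natAbs_iff.mp h with h' | h'
      · subst h'
        have := sol_sqeq _ _ _ hm hm'
        omega
      · have hlt : m.natAbs < (m - m' - 1).natAbs := by omega
        rcases sol_gapA _ _ _ _ hm hd hlt with h' | h' <;> omega
    · have hG := sol_gapA _ _ _ _ hm' hm h
      rcases Nat.lt_trichotomy (m - m' - 1).natAbs m.natAbs with h2 | h2 | h2
      · rcases sol_gapA _ _ _ _ hd hm h2 with h' | h' <;> omega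
      · rcases Int.natAbs_eq_natAbs_iff.mp h2 with h' | h'
        · rw [h'] at hd
          have := sol_sqeq _ _ _ hm hd
          omega
        · omega
      · rcases sol_gapA _ _ _ _ hm hd h2 with h' | h' <;> omega

lemma pairMain (m r m' r' : ℤ) (hm : Sol m r) (hm' : Sol m' r')
    (hg : m = m' + 1 ∨ Sol (m - m' - 1) (r - r' - 3)) :
    (m = 2 ∧ (r = 3 ∨ r = -3) ∧ m' = 1 ∧ (r' = 1 ∨ r' = -1)) ∨
    (m = -1 ∧ (r = 1 ∨ r = -1) ∧ m' = -2 ∧ (r' = 3 ∨ r' = -3)) ∨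
    (m = 1 ∧ r = 1 ∧ m' = 1 ∧ r' = -1) ∨
    (m = 1 ∧ r = 1 ∧ m' = -1 ∧ r' = -1) ∨
    (m = -1 ∧ r = 1 ∧ m' = -1 ∧ r' = -1) := by
  rcases hg with hl | hf
  · have hm2 : Sol (m' + 1) r := by rw [← hl]; exact hm
    rcases pairL m' r' r hm' hm2 with h1 | h1
    · left
      have hr' := rval1 m' r' hm' (Or.inl h1)
      have hr := rval2 m r hm (by omega)
      exact ⟨by omega, hr, h1, hr'⟩
    · right; left
      have hr' := rval2 m' r' hm' (Or.inr h1)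
      have hr := rval1 m r hm (by omega)
      exact ⟨by omega, hr, h1, hr'⟩
  · rcases pairF m r m' r' hm hm' hf with h | h | h
    · right; right; left; exact h
    · right; right; right; left; exact h
    · right; right; right; right; exact h

set_option maxHeartbeats 4000000

theorem stmt_8 (a₁ b₁ a₂ b₂ a₃ b₃ : ℤ)
    (h₁ : f (-a₁) (-b₁) = 0) (h₂ : f (-a₂) (-b₂) = 0) (h₃ : f (-a₃) (-b₃) = 0)
    (h₁₂ : g (a₁ - a₂) (b₁ - b₂) = 0) (h₁₃ : g (a₁ - a₃) (b₁ - b₃) = 0)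
    (h₂₃ : g (a₂ - a₃) (b₂ - b₃) = 0) :
    (a₁, b₁, a₂, b₂, a₃, b₃) = (0, 1, 2, 0, -3, 3) ∨
    (a₁, b₁, a₂, b₂, a₃, b₃) = (0, 1, 2, 0, 3, 0) ∨
    (a₁, b₁, a₂, b₂, a₃, b₃) = (1, -1, 2, -1, 4, -2) ∨
    (a₁, b₁, a₂, b₂, a₃, b₃) = (7, -4, 2, -1, 4, -2) := by
  simp only [f] at h₁ h₂ h₃
  simp only [g, f, mul_eq_zero] at h₁₂ h₁₃ h₂₃
  have S1 : Sol (1-a₁-2*b₁) (3-2*a₁-2*b₁) := by unfold Sol; linear_combination (-4)*h₁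
  have S2 : Sol (1-a₂-2*b₂) (3-2*a₂-2*b₂) := by unfold Sol; linear_combination (-4)*h₂
  have S3 : Sol (1-a₃-2*b₃) (3-2*a₃-2*b₃) := by unfold Sol; linear_combination (-4)*h₃
  have G12 : (1-a₁-2*b₁) = (1-a₂-2*b₂) + 1 ∨
      Sol ((1-a₁-2*b₁) - (1-a₂-2*b₂) - 1) ((3-2*a₁-2*b₁) - (3-2*a₂-2*b₂) - 3) := by
    rcases h₁₂ with hl | hf
    · left; omega
    · right; unfold Sol; linear_combination (-4)*hf
  have G13 : (1-a₁-2*b₁) = (1-a₃-2*b₃) + 1 ∨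
      Sol ((1-a₁-2*b₁) - (1-a₃-2*b₃) - 1) ((3-2*a₁-2*b₁) - (3-2*a₃-2*b₃) - 3) := by
    rcases h₁₃ with hl | hf
    · left; omega
    · right; unfold Sol; linear_combination (-4)*hf
  have G23 : (1-a₂-2*b₂) = (1-a₃-2*b₃) + 1 ∨
      Sol ((1-a₂-2*b₂) - (1-a₃-2*b₃) - 1) ((3-2*a₂-2*b₂) - (3-2*a₃-2*b₃) - 3) := by
    rcases h₂₃ with hl | hf
    · left; omega
    · right; unfold Sol; linear_combination (-4)*hf
  have P12 := pairMain _ _ _ _ S1 S2 G12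
  have P13 := pairMain _ _ _ _ S1 S3 G13
  have P23 := pairMain _ _ _ _ S2 S3 G23
  simp only [Prod.mk.injEq]
  rcases P12 with h|h|h|h|h <;> rcases P13 with h'|h'|h'|h'|h' <;>
    rcases P23 with h''|h''|h''|h''|h'' <;> omega
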